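/- Let H_A = ℂ^a, H_B = ℂ^b, H_C = ℂ^c be finite-dimensional spaces and let U be a matrix on (H_A ⊗ H_B) ⊗ H_C that can be written as U = ∑_{j=1}^r Q_j ⊗ R_j, where Q_1, ..., Q_r are linearly independent (ab)×(ab) complex matrices (acting on H_A ⊗ H_B) and R_1, ..., R_r are linearly independent c×c complex matrices. Then the tripartite Schmidt rank of U equals the minimum number m for which there exist product matrices P_1 = X_1 ⊗ Y_1, ..., P_m = X_m ⊗ Y_m (with X_i an a×a matrix and Y_i a b×b matrix, the tensor being the Kronecker product) such that span{Q_1, ..., Q_r} ⊆ span{P_1, ..., P_m}. -/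
import Mathlib


open Matrix Kronecker

/-- Tripartite Schmidt rank of a matrix on (ℂ^a ⊗ ℂ^b) ⊗ ℂ^c. -/
noncomputable def sr3 {a b c : ℕ}
    (U : Matrix ((Fin a × Fin b) × Fin c) ((Fin a × Fin b) × Fin c) ℂ) : ℕ :=
  sInf {r | ∃ (A : Fin r → Matrix (Fin a) (Fin a) ℂ)
    (B : Fin r → Matrix (Fin b) (Fin b) ℂ) (C : Fin r → Matrix (Fin c) (Fin c) ℂ),
    U = ∑ j, (A j ⊗ₖ B j) ⊗ₖ C j}

/-- A dual family for a linearly independent family over a field. -/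
lemma dual_family {ι : Type*} [DecidableEq ι] {V : Type*} [AddCommGroup V] [Module ℂ V]
    {v : ι → V} (hv : LinearIndependent ℂ v) :
    ∃ f : ι → (V →ₗ[ℂ] ℂ), ∀ i j, f i (v j) = if j = i then 1 else 0 := by
  obtain ⟨q, hq⟩ := (Submodule.span ℂ (Set.range v)).exists_isCompl
  let proj := Submodule.linearProjOfIsCompl _ q hq
  refine ⟨fun i => (Finsupp.lapply i).comp
    ((hv.repr : Submodule.span ℂ (Set.range v) →ₗ[ℂ] (ι →₀ ℂ)).comp proj), fun i j => ?_⟩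
  have hmem : v j ∈ Submodule.span ℂ (Set.range v) := Submodule.subset_span ⟨j, rfl⟩
  have hp : proj (v j) = ⟨v j, hmem⟩ :=
    Submodule.linearProjOfIsCompl_apply_left hq ⟨v j, hmem⟩
  have hr : hv.repr ⟨v j, hmem⟩ = Finsupp.single j 1 :=
    hv.repr_eq_single j ⟨v j, hmem⟩ rfl
  simp [proj, hp, hr, Finsupp.single_apply]

/-- "Partial evaluation" of the last tensor factor by a functional. -/
noncomputable def pslice {c : ℕ} {α : Type*}
    (f : Matrix (Fin c) (Fin c) ℂ →ₗ[ℂ] ℂ) :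
    Matrix (α × Fin c) (α × Fin c) ℂ →ₗ[ℂ] Matrix α α ℂ where
  toFun M := Matrix.of fun p q => f (Matrix.of fun x y => M (p, x) (q, y))
  map_add' M N := by
    ext p q
    have h : (Matrix.of fun x y => (M + N) (p, x) (q, y)) =
        (Matrix.of fun x y => M (p, x) (q, y)) + (Matrix.of fun x y => N (p, x) (q, y)) := by
      ext x y; simp
    show f (Matrix.of fun x y => (M + N) (p, x) (q, y)) =
      f (Matrix.of fun x y => M (p, x) (q, y)) + f (Matrix.of fun x y => N (p, x) (q, y))
    rw [h, map_add]
  map_smul' r M := by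
    ext p q
    have h : (Matrix.of fun x y => (r • M) (p, x) (q, y)) =
        r • (Matrix.of fun x y => M (p, x) (q, y)) := by
      ext x y; simp
    show f (Matrix.of fun x y => (r • M) (p, x) (q, y)) =
      r * f (Matrix.of fun x y => M (p, x) (q, y))
    rw [h, _root_.map_smul, smul_eq_mul]

lemma pslice_kron {c : ℕ} {α : Type*} [Fintype α] [DecidableEq α]
    (f : Matrix (Fin c) (Fin c) ℂ →ₗ[ℂ] ℂ)
    (P : Matrix α α ℂ) (C : Matrix (Fin c) (Fin c) ℂ) :
    pslice f (P ⊗ₖ C) = f C • P := by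
  ext p q
  have h : (Matrix.of fun x y => (P ⊗ₖ C) ((p, x)) ((q, y))) = P p q • C := by
    ext x y; simp [Matrix.kroneckerMap_apply, smul_eq_mul]
  show f (Matrix.of fun x y => (P ⊗ₖ C) ((p, x)) ((q, y))) = (f C • P) p q
  rw [h, _root_.map_smul, smul_eq_mul, Matrix.smul_apply, smul_eq_mul, mul_comm]

lemma sum_kron {ι : Type*} {α β : Type*} (s : Finset ι)
    (M : ι → Matrix α α ℂ) (N : Matrix β β ℂ) :
    (∑ i ∈ s, M i) ⊗ₖ N = ∑ i ∈ s, M i ⊗ₖ N := by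
  ext ⟨p, x⟩ ⟨q, y⟩
  simp [Matrix.sum_apply, Finset.sum_mul]

lemma kron_sum {ι : Type*} {α β : Type*} (s : Finset ι)
    (M : Matrix α α ℂ) (N : ι → Matrix β β ℂ) :
    M ⊗ₖ (∑ i ∈ s, N i) = ∑ i ∈ s, M ⊗ₖ N i := by
  ext ⟨p, x⟩ ⟨q, y⟩
  simp [Matrix.sum_apply, Finset.mul_sum]

theorem stmt0 {a b c r : ℕ}
    (U : Matrix ((Fin a × Fin b) × Fin c) ((Fin a × Fin b) × Fin c) ℂ)
    (Q : Fin r → Matrix (Fin a × Fin b) (Fin a × Fin b) ℂ)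
    (R : Fin r → Matrix (Fin c) (Fin c) ℂ)
    (hQ : LinearIndependent ℂ Q) (hR : LinearIndependent ℂ R)
    (hU : U = ∑ j, Q j ⊗ₖ R j) :
    sr3 U = sInf {m | ∃ (X : Fin m → Matrix (Fin a) (Fin a) ℂ)
      (Y : Fin m → Matrix (Fin b) (Fin b) ℂ),
      Submodule.span ℂ (Set.range Q) ≤
        Submodule.span ℂ (Set.range fun i => X i ⊗ₖ Y i)} := by
  unfold sr3
  congr 1
  ext m
  constructor
  · rintro ⟨A, B, C, hABC⟩
    refine ⟨A, B, ?_⟩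
    obtain ⟨f, hf⟩ := dual_family hR
    rw [Submodule.span_le]
    rintro _ ⟨k, rfl⟩
    have h1 : pslice (f k) U = Q k := by
      rw [hU, map_sum]
      simp only [pslice_kron, hf]
      simp [ite_smul]
    have h2 : pslice (f k) U = ∑ j, f k (C j) • (A j ⊗ₖ B j) := by
      rw [hABC, map_sum]
      simp only [pslice_kron]
    rw [← h1, h2]
    exact Submodule.sum_mem _ fun j _ =>
      Submodule.smul_mem _ _ (Submodule.subset_span ⟨j, rfl⟩)
  · rintro ⟨X, Y, hspan⟩
    have hmem : ∀ j, Q j ∈ Submodule.span ℂ (Set.range fun i => X i ⊗ₖ Y i) :=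
      fun j => hspan (Submodule.subset_span ⟨j, rfl⟩)
    choose co hco using fun j => (Submodule.mem_span_range_iff_exists_fun ℂ).1 (hmem j)
    refine ⟨X, Y, fun i => ∑ j, co j i • R j, ?_⟩
    calc U = ∑ j, Q j ⊗ₖ R j := hU
      _ = ∑ j, (∑ i, co j i • (X i ⊗ₖ Y i)) ⊗ₖ R j := by
          refine Finset.sum_congr rfl fun j _ => ?_; rw [hco j]
      _ = ∑ j, ∑ i, co j i • ((X i ⊗ₖ Y i) ⊗ₖ R j) := by
          refine Finset.sum_congr rfl fun j _ => ?_
          rw [sum_kron]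
          exact Finset.sum_congr rfl fun i _ => Matrix.smul_kronecker _ _ _
      _ = ∑ i, ∑ j, co j i • ((X i ⊗ₖ Y i) ⊗ₖ R j) := Finset.sum_comm
      _ = ∑ i, (X i ⊗ₖ Y i) ⊗ₖ (∑ j, co j i • R j) := by
          refine Finset.sum_congr rfl fun i _ => ?_
          rw [kron_sum]
          refine Finset.sum_congr rfl fun j _ => ?_
          exact (Matrix.kronecker_smul _ _ _).symm
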